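/- Let K be a real number with 0 < K < 1 and let s be the unique real root of p_K(x) = -2x³ + x² + K. Let A be the 4×4 real matrix with rows (a,b,c,b), (b,a,b,c), (c,b,a,b), (b,c,b,a) where a+2b+c=1 (a Kimura 2-parameter matrix), and set α = 1 - 2(b+c) and β = 1 - 4b. Then A has all entries strictly positive and det(A) = K if and only if √K < |α| < s and β = K/α². -/

import Mathlib

theorem stmt_6 (K : ℝ) (hK0 : 0 < K) (hK1 : K < 1) (s : ℝ)
    (hs : -2 * s ^ 3 + s ^ 2 + K = 0)
    (hsu : ∀ t : ℝ, -2 * t ^ 3 + t ^ 2 + K = 0 → t = s)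
    (a b c : ℝ) (hsum : a + 2 * b + c = 1)
    (A : Matrix (Fin 4) (Fin 4) ℝ)
    (hA : A = !![a, b, c, b; b, a, b, c; c, b, a, b; b, c, b, a])
    (α β : ℝ) (hα : α = 1 - 2 * (b + c)) (hβ : β = 1 - 4 * b) :
    ((∀ i j, 0 < A i j) ∧ A.det = K) ↔
      (Real.sqrt K < |α| ∧ |α| < s ∧ β = K / α ^ 2) := by
  have hs0 : 0 < s := by
    by_contra h
    push_neg at h
    nlinarith [sq_nonneg s, mul_nonneg (neg_nonneg.mpr h) (sq_nonneg s)]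
  have key : ∀ t : ℝ, 0 ≤ t → (0 < -2 * t ^ 3 + t ^ 2 + K ↔ t < s) := by
    intro t ht
    constructor
    · intro hp
      by_contra hts
      push_neg at hts
      rcases eq_or_lt_of_le hts with h | h
      · rw [h] at hs; linarith
      · have hM : -2 * (t + 2) ^ 3 + (t + 2) ^ 2 + K < 0 := by nlinarith
        have hcont : ContinuousOn (fun x : ℝ => -2 * x ^ 3 + x ^ 2 + K)
            (Set.Icc t (t + 2)) := by fun_prop
        obtain ⟨r, hrm, hre⟩ := intermediate_value_Icc' (by linarith : t ≤ t + 2) hcont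
          (Set.mem_Icc.mpr ⟨le_of_lt hM, le_of_lt hp⟩)
        have hrs := hsu r hre
        have := hrm.1
        linarith
    · intro hts
      by_contra hp
      push_neg at hp
      rcases eq_or_lt_of_le hp with h | h
      · have := hsu t h; linarith
      · have h0 : (0:ℝ) < -2 * (0:ℝ) ^ 3 + (0:ℝ) ^ 2 + K := by norm_num; linarith
        have hcont : ContinuousOn (fun x : ℝ => -2 * x ^ 3 + x ^ 2 + K)
            (Set.Icc 0 t) := by fun_prop
        obtain ⟨r, hrm, hre⟩ := intermediate_value_Icc' ht hcont
          (Set.mem_Icc.mpr ⟨le_of_lt h, le_of_lt h0⟩)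
        have hrs := hsu r hre
        have := hrm.2
        linarith
  have ha' : a = 1 - 2 * b - c := by linarith
  subst ha' hA hα hβ
  have hdet : (!![1 - 2 * b - c, b, c, b; b, 1 - 2 * b - c, b, c;
      c, b, 1 - 2 * b - c, b; b, c, b, 1 - 2 * b - c] : Matrix (Fin 4) (Fin 4) ℝ).det
      = (1 - 2 * (b + c)) ^ 2 * (1 - 4 * b) := by
    simp [Matrix.det_succ_row_zero, Fin.sum_univ_succ, Fin.succAbove]
    ring
  rw [hdet]
  set α := 1 - 2 * (b + c) with hα
  set β := 1 - 4 * b with hβ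
  have habs3 : |α| ^ 3 = α ^ 2 * |α| := by
    rw [pow_succ, sq_abs]
  constructor
  · rintro ⟨hpos, hdK⟩
    have hb : 0 < b := by have := hpos 0 1; simpa using this
    have hc : 0 < c := by have := hpos 0 2; simpa using this
    have haa : 0 < 1 - 2 * b - c := by have := hpos 0 0; simpa using this
    have hα2 : 0 < α ^ 2 := by
      rcases eq_or_ne α 0 with h | h
      · rw [h] at hdK; simp at hdK; linarith
      · positivity
    have hβ0 : 0 < β := by nlinarith
    have hKα : K < α ^ 2 := by nlinarith
    have h1 : Real.sqrt K < |α| := by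
      rw [← Real.sqrt_sq_eq_abs]
      exact Real.sqrt_lt_sqrt (le_of_lt hK0) hKα
    have h1β : 2 * |α| < 1 + β := by
      rcases abs_cases α with ⟨h, _⟩ | ⟨h, _⟩ <;> rw [h] <;> simp only [hα, hβ] <;> linarith
    have hp : 0 < -2 * |α| ^ 3 + |α| ^ 2 + K := by
      rw [habs3, sq_abs, ← hdK]; nlinarith
    exact ⟨h1, (key |α| (abs_nonneg α)).1 hp, by rw [eq_div_iff hα2.ne']; linarith⟩
  · rintro ⟨h1, h2, h3⟩
    have hsK : 0 < Real.sqrt K := Real.sqrt_pos.mpr hK0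
    have hαabs : 0 < |α| := lt_trans hsK h1
    have hα2 : 0 < α ^ 2 := by rw [← sq_abs]; positivity
    have hKα : K < α ^ 2 := by
      nlinarith [Real.sq_sqrt (le_of_lt hK0), sq_abs α, mul_self_lt_mul_self (le_of_lt hsK) h1]
    have hβK : β = K / α ^ 2 := h3
    have hβ0 : 0 < β := by rw [hβK]; positivity
    have hβ1 : β < 1 := by rw [hβK, div_lt_one hα2]; exact hKα
    have hdet2 : α ^ 2 * β = K := by rw [hβK]; exact mul_div_cancel₀ K hα2.ne'
    have hp : 0 < -2 * |α| ^ 3 + |α| ^ 2 + K := (key |α| (abs_nonneg α)).2 h2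
    have h1β : 2 * |α| < 1 + β := by
      rw [habs3] at hp
      rw [sq_abs] at hp
      nlinarith
    have hb : 0 < b := by simp only [hβ] at hβ1; linarith
    have hc : 0 < c := by
      rcases abs_cases α with ⟨h, _⟩ | ⟨h, _⟩ <;> rw [h] at h1β <;> simp only [hα, hβ] at h1β <;> linarith
    have haa : 0 < 1 - 2 * b - c := by
      rcases abs_cases α with ⟨h, _⟩ | ⟨h, _⟩ <;> rw [h] at h1β <;> simp only [hα, hβ] at h1β <;> linarith
    refine ⟨?_, hdet2⟩
    intro i j
    fin_cases i <;> fin_cases j <;> simp <;> linarith
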